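/- Suppose that, for each t = 1, …, T, the function f_t is M_t-relatively Lipschitz continuous and μ_t-relatively strongly convex w.r.t. the prox-function h, and d : E → ℝ is M_d-relatively Lipschitz continuous and 1-relatively strongly convex w.r.t. h with d(x) ≥ 0 for all x ∈ Q and A² = sup_{x ∈ Q} d(x) < ∞. Run regularized online mirror descent with coefficients λ_t = ½·(√((μ_{1:t} + λ_{1:t−1})² + 8·M_t²/(A² + 2·M_d²)) − (μ_{1:t} + λ_{1:t−1})) and step sizes η_{t+1} = 1/(μ_{1:t} + λ_{1:t}), where μ_{1:t} + λ_{1:t} > 0 for all t. Then Regret_T ≤ λ_{1:T}·A² + Σ_{t=1}^T (M_t + λ_t·M_d)²/(μ_{1:t} + λ_{1:t}). -/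

import Mathlib

open scoped RealInnerProductSpace
open Finset

/-- The Bregman divergence `V(y,x) = h(y) − h(x) − ⟨∇h(x), y − x⟩`. -/
noncomputable def breg {E : Type*} [NormedAddCommGroup E] [InnerProductSpace ℝ E]
    [CompleteSpace E] (h : E → ℝ) (y x : E) : ℝ :=
  h y - h x - ⟪gradient h x, y - x⟫

/-- `f` is `M`-relatively Lipschitz continuous w.r.t. the prox-function `h` on `Q`. -/
noncomputable def RelLipschitz {E : Type*} [NormedAddCommGroup E] [InnerProductSpace ℝ E]
    [CompleteSpace E] (h : E → ℝ) (Q : Set E) (M : ℝ) (f : E → ℝ) : Prop :=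
  ∀ x ∈ Q, ∀ y ∈ Q, 0 ≤ ⟪gradient f x, y - x⟫ + M * Real.sqrt (2 * breg h y x)

/-- `f` is `μ`-relatively strongly convex w.r.t. the prox-function `h` on `Q`. -/
noncomputable def RelStrongConvex {E : Type*} [NormedAddCommGroup E] [InnerProductSpace ℝ E]
    [CompleteSpace E] (h : E → ℝ) (Q : Set E) (μ : ℝ) (f : E → ℝ) : Prop :=
  ∀ x ∈ Q, ∀ y ∈ Q, f y + ⟪gradient f y, x - y⟫ + μ * breg h x y ≤ f x

/-- One mirror-descent step from `x` with step size `η` in the direction `v`: there is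
`y` with `∇h(y) = ∇h(x) − η·v`, and the next iterate `x'` is the Bregman projection of
`y` onto `Q`. -/
noncomputable def MDStepV {E : Type*} [NormedAddCommGroup E] [InnerProductSpace ℝ E]
    [CompleteSpace E] (h : E → ℝ) (Q : Set E) (η : ℝ) (v : E) (x x' : E) : Prop :=
  ∃ y : E, gradient h y = gradient h x - η • v ∧ x' ∈ Q ∧
    IsMinOn (fun z => breg h z y) Q x'

section Aux

variable {E : Type*} [NormedAddCommGroup E] [InnerProductSpace ℝ E] [CompleteSpace E]

lemma hasDerivAt_comp_line {h : E → ℝ} (hd : Differentiable ℝ h) (x w : E) (θ : ℝ) :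
    HasDerivAt (fun t : ℝ => h (x + t • w)) ⟪gradient h (x + θ • w), w⟫ θ := by
  have h1 : HasDerivAt (fun t : ℝ => x + t • w) w θ := by
    simpa using ((hasDerivAt_id θ).smul_const w).const_add x
  have h2 : HasFDerivAt h ((InnerProductSpace.toDual ℝ E) (gradient h (x + θ • w)))
      (x + θ • w) := (hd (x + θ • w)).hasGradientAt.hasFDerivAt
  have h3 := h2.comp_hasDerivAt θ h1
  simpa [InnerProductSpace.toDual_apply_apply, Function.comp_def] using h3

lemma breg_nonneg {h : E → ℝ} (hd : Differentiable ℝ h) (hc : ConvexOn ℝ Set.univ h)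
    (y x : E) : 0 ≤ breg h y x := by
  set w := y - x with hw
  have hψc : ConvexOn ℝ Set.univ (fun θ : ℝ => h (x + θ • w)) := by
    have h1 := hc.comp_affineMap (AffineMap.lineMap x (x + w) : ℝ →ᵃ[ℝ] E)
    have h2 : (fun θ : ℝ => h (x + θ • w)) =
        h ∘ (AffineMap.lineMap x (x + w) : ℝ →ᵃ[ℝ] E) := by
      funext θ
      simp only [Function.comp_apply, AffineMap.lineMap_apply_module', add_sub_cancel_left]
      congr 1
      abel
    rw [h2]
    simpa using h1
  have hder : HasDerivAt (fun θ : ℝ => h (x + θ • w)) ⟪gradient h x, w⟫ 0 := by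
    have := hasDerivAt_comp_line hd x w 0
    simpa using this
  have hs := hψc.le_slope_of_hasDerivAt (Set.mem_univ (0:ℝ)) (Set.mem_univ (1:ℝ))
    one_pos hder
  rw [slope_def_field] at hs
  have h1 : x + (1:ℝ) • w = y := by rw [one_smul, hw]; abel
  have h0 : x + (0:ℝ) • w = x := by simp
  rw [h1, h0] at hs
  simp only [breg, hw]
  have : ⟪gradient h x, y - x⟫ ≤ (h y - h x) / (1 - 0) := hs
  simp at this
  linarith

lemma breg_three_point (h : E → ℝ) (a b c : E) :
    ⟪gradient h a - gradient h b, b - c⟫ = breg h c a - breg h c b - breg h b a := by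
  simp only [breg, inner_sub_left, inner_sub_right]
  ring

lemma deriv_nonneg_of_min {ψ : ℝ → ℝ} {c : ℝ} (hψ : HasDerivAt ψ c 0)
    (hm : ∀ θ ∈ Set.Icc (0:ℝ) 1, ψ 0 ≤ ψ θ) : 0 ≤ c := by
  have h1 : HasDerivWithinAt ψ c (Set.Ioi 0) 0 := hψ.hasDerivWithinAt
  rw [hasDerivWithinAt_iff_tendsto_slope] at h1
  have hset : Set.Ioi (0:ℝ) \ {0} = Set.Ioi 0 := Set.diff_singleton_eq_self (by simp)
  rw [hset] at h1
  refine ge_of_tendsto h1 ?_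
  filter_upwards [self_mem_nhdsWithin, nhdsWithin_le_nhds (Iio_mem_nhds one_pos)]
    with θ hθ1 hθ2
  have hθpos : (0:ℝ) < θ := hθ1
  rw [slope_def_field]
  apply div_nonneg
  · have := hm θ ⟨hθpos.le, (show θ < 1 from hθ2).le⟩
    linarith
  · linarith

lemma breg_min_inner_nonneg {h : E → ℝ} (hd : Differentiable ℝ h) {Q : Set E}
    (hQ : Convex ℝ Q) {y p z : E} (hp : p ∈ Q) (hz : z ∈ Q)
    (hmin : IsMinOn (fun u => breg h u y) Q p) :
    0 ≤ ⟪gradient h p - gradient h y, z - p⟫ := by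
  set w := z - p with hw
  have d1 : HasDerivAt (fun θ : ℝ => h (p + θ • w)) ⟪gradient h p, w⟫ 0 := by
    have := hasDerivAt_comp_line hd p w 0
    simpa using this
  have d3 : HasDerivAt
      (fun θ : ℝ => h y + (⟪gradient h y, p - y⟫ + θ * ⟪gradient h y, w⟫))
      ⟪gradient h y, w⟫ 0 := by
    simpa using (((hasDerivAt_mul_const (⟪gradient h y, w⟫)).const_add
      (⟪gradient h y, p - y⟫)).const_add (h y))
  have heq : (fun θ : ℝ => breg h (p + θ • w) y) =
      fun θ : ℝ => (h (p + θ • w)) -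
        (h y + (⟪gradient h y, p - y⟫ + θ * ⟪gradient h y, w⟫)) := by
    funext θ
    simp only [breg]
    rw [show p + θ • w - y = (p - y) + θ • w by abel, inner_add_right,
      real_inner_smul_right]
    ring
  have d2 : HasDerivAt (fun θ : ℝ => breg h (p + θ • w) y)
      (⟪gradient h p, w⟫ - ⟪gradient h y, w⟫) 0 := by
    rw [heq]; exact d1.sub d3
  have hψm : ∀ θ ∈ Set.Icc (0:ℝ) 1,
      (fun θ : ℝ => breg h (p + θ • w) y) 0 ≤ (fun θ : ℝ => breg h (p + θ • w) y) θ := by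
    intro θ hθ
    have hmem : p + θ • w ∈ Q := hQ.add_smul_sub_mem hp hz hθ
    have h0 : p + (0:ℝ) • w = p := by simp
    simp only [h0]
    exact isMinOn_iff.mp hmin _ hmem
  have := deriv_nonneg_of_min d2 hψm
  rw [inner_sub_left]
  linarith

lemma amgm_aux {c S W : ℝ} (hS : 0 < S) (hW : 0 ≤ W) :
    c * Real.sqrt (2 * W) ≤ c ^ 2 / S + S * W := by
  set s := Real.sqrt (2 * W) with hs
  have hs0 : 0 ≤ s := Real.sqrt_nonneg _
  have hs2 : s ^ 2 = 2 * W := Real.sq_sqrt (by linarith)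
  rw [div_add' _ _ _ (ne_of_gt hS), le_div_iff₀ hS]
  nlinarith [sq_nonneg (c - S * s), sq_nonneg c, mul_pos hS hS]

lemma telescope_aux (G : ℕ → ℝ) (n : ℕ) :
    ∑ t ∈ Finset.Icc 1 n, (G (t - 1) - G t) = G 0 - G n := by
  induction n with
  | zero => rw [Finset.Icc_eq_empty (by omega)]; simp
  | succ k ih =>
    rw [Finset.sum_Icc_succ_top (by omega : 1 ≤ k + 1), ih,
      show k + 1 - 1 = k from by omega]
    ring

/-- The key one-step bound. -/
lemma step_bound {h : E → ℝ} (hdiff : Differentiable ℝ h)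
    (hconv : ConvexOn ℝ Set.univ h) {Q : Set E} (hQconv : Convex ℝ Q)
    (fk : E → ℝ) (Mk μk lamk St Sk Md A2 : ℝ)
    (hSt : 0 < St) (hsplit : St = Sk + μk + lamk) (hlamk : 0 ≤ lamk)
    (d : E → ℝ) (p p' xs : E) (hp' : p' ∈ Q) (hxs : xs ∈ Q)
    (lipf : 0 ≤ ⟪gradient fk p, p' - p⟫ + Mk * Real.sqrt (2 * breg h p' p))
    (lipd : 0 ≤ ⟪gradient d p, p' - p⟫ + Md * Real.sqrt (2 * breg h p' p))
    (scf : fk p + ⟪gradient fk p, xs - p⟫ + μk * breg h xs p ≤ fk xs)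
    (scd : d p + ⟪gradient d p, xs - p⟫ + breg h xs p ≤ d xs)
    (hdxs : d xs ≤ A2) (hdp : 0 ≤ d p)
    (y : E)
    (hy : gradient h y = gradient h p - (1 / St) • (gradient fk p + lamk • gradient d p))
    (hmin : IsMinOn (fun z => breg h z y) Q p') :
    fk p - fk xs ≤ lamk * A2 + (Sk * breg h xs p - St * breg h xs p')
      + (Mk + lamk * Md) ^ 2 / St := by
  have hW : 0 ≤ breg h p' p := breg_nonneg hdiff hconv _ _
  have opt := breg_min_inner_nonneg hdiff hQconv hp' hxs hmin
  rw [hy, show gradient h p' - (gradient h p -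
      (1 / St) • (gradient fk p + lamk • gradient d p)) =
      (gradient h p' - gradient h p) + (1 / St) • (gradient fk p + lamk • gradient d p)
      from by abel, inner_add_left, real_inner_smul_left] at opt
  have flip : ⟪gradient h p' - gradient h p, xs - p'⟫ =
      breg h xs p - breg h xs p' - breg h p' p := by
    calc ⟪gradient h p' - gradient h p, xs - p'⟫
        = ⟪gradient h p - gradient h p', p' - xs⟫ := by
          rw [show gradient h p - gradient h p' = -(gradient h p' - gradient h p)
            from by abel, show p' - xs = -(xs - p') from by abel, inner_neg_neg]
      _ = _ := breg_three_point h p p' xs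
  rw [flip] at opt
  -- opt : 0 ≤ breg h xs p - breg h xs p' - breg h p' p + 1/St * ⟪v, xs - p'⟫
  have key : -(⟪gradient fk p + lamk • gradient d p, xs - p'⟫) ≤
      St * (breg h xs p - breg h xs p' - breg h p' p) := by
    have h1 : -(breg h xs p - breg h xs p' - breg h p' p) ≤
        1 / St * ⟪gradient fk p + lamk • gradient d p, xs - p'⟫ := by linarith
    have h2 := mul_le_mul_of_nonneg_left h1 hSt.le
    rw [show St * (1 / St * ⟪gradient fk p + lamk • gradient d p, xs - p'⟫) =
        ⟪gradient fk p + lamk • gradient d p, xs - p'⟫ from by field_simp] at h2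
    linarith [h2]
  have keyE : -⟪gradient fk p, xs⟫ + ⟪gradient fk p, p'⟫
      + lamk * ⟪gradient d p, p'⟫ - lamk * ⟪gradient d p, xs⟫ ≤
      St * breg h xs p - St * breg h xs p' - St * breg h p' p := by
    have e : ⟪gradient fk p + lamk • gradient d p, xs - p'⟫ =
        ⟪gradient fk p, xs⟫ - ⟪gradient fk p, p'⟫
          + (lamk * ⟪gradient d p, xs⟫ - lamk * ⟪gradient d p, p'⟫) := by
      rw [inner_add_left, real_inner_smul_left, inner_sub_right, inner_sub_right]
      ring
    rw [e] at key
    linarith [key]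
  have lipf' : 0 ≤ ⟪gradient fk p, p'⟫ - ⟪gradient fk p, p⟫
      + Mk * Real.sqrt (2 * breg h p' p) := by
    rw [inner_sub_right] at lipf; linarith
  have lipd' : 0 ≤ lamk * ⟪gradient d p, p'⟫ - lamk * ⟪gradient d p, p⟫
      + lamk * (Md * Real.sqrt (2 * breg h p' p)) := by
    rw [inner_sub_right] at lipd
    nlinarith [mul_le_mul_of_nonneg_left lipd hlamk]
  have scf' : fk p + (⟪gradient fk p, xs⟫ - ⟪gradient fk p, p⟫)
      + μk * breg h xs p ≤ fk xs := by
    rw [← inner_sub_right]; exact scf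
  have scd' : lamk * d p + (lamk * ⟪gradient d p, xs⟫ - lamk * ⟪gradient d p, p⟫)
      + lamk * breg h xs p ≤ lamk * d xs := by
    rw [inner_sub_right] at scd
    nlinarith [mul_le_mul_of_nonneg_left scd hlamk]
  have h7a : lamk * d xs ≤ lamk * A2 := mul_le_mul_of_nonneg_left hdxs hlamk
  have h7b : 0 ≤ lamk * d p := mul_nonneg hlamk hdp
  have amg : (Mk + lamk * Md) * Real.sqrt (2 * breg h p' p) ≤
      (Mk + lamk * Md) ^ 2 / St + St * breg h p' p := amgm_aux hSt hW
  have hprod : St * breg h xs p =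
      Sk * breg h xs p + μk * breg h xs p + lamk * breg h xs p := by
    rw [hsplit]; ring
  nlinarith [keyE, lipf', lipd', scf', scd', h7a, h7b, amg, hprod]

end Aux

/-- Theorem 3 (Adaptive General-Norm Online Gradient Descent with Regularization):
with `λ_t = ½·(√((μ_{1:t} + λ_{1:t−1})² + 8·M_t²/(A² + 2·M_d²)) − (μ_{1:t} + λ_{1:t−1}))`
and step sizes `η_{t+1} = 1/(μ_{1:t} + λ_{1:t})`,
`Regret_T ≤ λ_{1:T}·A² + Σ_{t=1}^T (M_t + λ_t·M_d)²/(μ_{1:t} + λ_{1:t})`. -/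
theorem regularized_online_mirror_descent_regret
    {E : Type*} [NormedAddCommGroup E] [InnerProductSpace ℝ E] [FiniteDimensional ℝ E]
    (Q : Set E) (hQne : Q.Nonempty) (hQclosed : IsClosed Q) (hQconv : Convex ℝ Q)
    (h : E → ℝ) (hdiff : Differentiable ℝ h) (hconv : ConvexOn ℝ Set.univ h)
    (T : ℕ) (hT : 0 < T)
    (f : ℕ → E → ℝ) (hfdiff : ∀ t, Differentiable ℝ (f t))
    (hfconv : ∀ t, ConvexOn ℝ Set.univ (f t))
    (M μ : ℕ → ℝ)
    (hMnn : ∀ t ∈ Finset.Icc 1 T, 0 ≤ M t)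
    (hfLip : ∀ t ∈ Finset.Icc 1 T, RelLipschitz h Q (M t) (f t))
    (hfSC : ∀ t ∈ Finset.Icc 1 T, RelStrongConvex h Q (μ t) (f t))
    (d : E → ℝ) (hddiff : Differentiable ℝ d) (hdconv : ConvexOn ℝ Set.univ d)
    (Md A2 : ℝ)
    (hdLip : RelLipschitz h Q Md d) (hdSC : RelStrongConvex h Q 1 d)
    (hdnn : ∀ z ∈ Q, 0 ≤ d z) (hA2 : IsLUB (d '' Q) A2)
    (lam : ℕ → ℝ)
    (hlam : ∀ t ∈ Finset.Icc 1 T, lam t =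
      (Real.sqrt (((∑ s ∈ Finset.Icc 1 t, μ s) + ∑ s ∈ Finset.Icc 1 (t - 1), lam s) ^ 2
          + 8 * (M t) ^ 2 / (A2 + 2 * Md ^ 2))
        - ((∑ s ∈ Finset.Icc 1 t, μ s) + ∑ s ∈ Finset.Icc 1 (t - 1), lam s)) / 2)
    (hpos : ∀ t ∈ Finset.Icc 1 T,
      0 < (∑ s ∈ Finset.Icc 1 t, μ s) + ∑ s ∈ Finset.Icc 1 t, lam s)
    (x : ℕ → E) (hx1 : x 1 ∈ Q)
    (hstep : ∀ t ∈ Finset.Icc 1 T,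
      MDStepV h Q (1 / ((∑ s ∈ Finset.Icc 1 t, μ s) + ∑ s ∈ Finset.Icc 1 t, lam s))
        (gradient (f t) (x t) + lam t • gradient d (x t)) (x t) (x (t + 1)))
    (xs : E) (hxsQ : xs ∈ Q)
    (hxsmin : ∀ y ∈ Q, ∑ t ∈ Finset.Icc 1 T, f t xs ≤ ∑ t ∈ Finset.Icc 1 T, f t y) :
    ∑ t ∈ Finset.Icc 1 T, f t (x t) - ∑ t ∈ Finset.Icc 1 T, f t xs ≤
      (∑ s ∈ Finset.Icc 1 T, lam s) * A2 +
        ∑ t ∈ Finset.Icc 1 T, (M t + lam t * Md) ^ 2 /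
          ((∑ s ∈ Finset.Icc 1 t, μ s) + ∑ s ∈ Finset.Icc 1 t, lam s) := by
  -- iterates stay in `Q`
  have hxQ : ∀ t : ℕ, 1 ≤ t → t ≤ T + 1 → x t ∈ Q := by
    intro t h1 h2
    match t, h1 with
    | 1, _ => exact hx1
    | (k+2), _ =>
      obtain ⟨y, _, hQ, _⟩ := hstep (k+1) (by rw [Finset.mem_Icc]; omega)
      exact hQ
  -- nonnegativity facts
  have hA2nn : 0 ≤ A2 := by
    obtain ⟨q, hq⟩ := hQne
    exact le_trans (hdnn q hq) (hA2.1 ⟨q, hq, rfl⟩)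
  have hlamnn : ∀ t ∈ Finset.Icc 1 T, 0 ≤ lam t := by
    intro t ht
    rw [hlam t ht]
    set a := (∑ s ∈ Finset.Icc 1 t, μ s) + ∑ s ∈ Finset.Icc 1 (t - 1), lam s with ha
    have hbnn : 0 ≤ 8 * (M t) ^ 2 / (A2 + 2 * Md ^ 2) :=
      div_nonneg (by positivity) (by nlinarith [sq_nonneg Md])
    have hsq : a ≤ Real.sqrt (a ^ 2 + 8 * (M t) ^ 2 / (A2 + 2 * Md ^ 2)) := by
      calc a ≤ |a| := le_abs_self a
        _ = Real.sqrt (a ^ 2) := (Real.sqrt_sq_eq_abs a).symm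
        _ ≤ _ := Real.sqrt_le_sqrt (by linarith)
    linarith
  -- the per-step bound
  have key : ∀ t ∈ Finset.Icc 1 T,
      f t (x t) - f t xs ≤ lam t * A2 +
        (((∑ s ∈ Finset.Icc 1 (t - 1), μ s) + ∑ s ∈ Finset.Icc 1 (t - 1), lam s)
            * breg h xs (x t)
          - ((∑ s ∈ Finset.Icc 1 t, μ s) + ∑ s ∈ Finset.Icc 1 t, lam s)
            * breg h xs (x (t + 1)))
        + (M t + lam t * Md) ^ 2 /
          ((∑ s ∈ Finset.Icc 1 t, μ s) + ∑ s ∈ Finset.Icc 1 t, lam s) := by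
    intro t ht
    have ht' := ht
    rw [Finset.mem_Icc] at ht'
    obtain ⟨k, rfl⟩ : ∃ k, t = k + 1 := ⟨t - 1, by omega⟩
    have hmem : k + 1 ∈ Finset.Icc 1 T := ht
    obtain ⟨y, hy, hp'Q, hmin⟩ := hstep (k+1) hmem
    have hpQ : x (k+1) ∈ Q := hxQ (k+1) (by omega) (by omega)
    have hSt := hpos (k+1) hmem
    have hsplit : (∑ s ∈ Finset.Icc 1 (k+1), μ s) + ∑ s ∈ Finset.Icc 1 (k+1), lam s =
        ((∑ s ∈ Finset.Icc 1 k, μ s) + ∑ s ∈ Finset.Icc 1 k, lam s)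
          + μ (k+1) + lam (k+1) := by
      rw [Finset.sum_Icc_succ_top (by omega : 1 ≤ k + 1),
        Finset.sum_Icc_succ_top (by omega : 1 ≤ k + 1)]
      ring
    have hscd := hdSC xs hxsQ (x (k+1)) hpQ
    simp only [Nat.add_sub_cancel]
    exact step_bound hdiff hconv hQconv (f (k+1)) (M (k+1)) (μ (k+1)) (lam (k+1))
      _ _ Md A2 hSt hsplit (hlamnn _ hmem) d (x (k+1)) (x (k+1+1)) xs hp'Q hxsQ
      (hfLip (k+1) hmem (x (k+1)) hpQ (x (k+1+1)) hp'Q)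
      (hdLip (x (k+1)) hpQ (x (k+1+1)) hp'Q)
      (hfSC (k+1) hmem xs hxsQ (x (k+1)) hpQ)
      (by linarith [hscd])
      (hA2.1 ⟨xs, hxsQ, rfl⟩) (hdnn _ hpQ) y hy hmin
  -- telescope
  set G : ℕ → ℝ := fun n =>
    ((∑ s ∈ Finset.Icc 1 n, μ s) + ∑ s ∈ Finset.Icc 1 n, lam s)
      * breg h xs (x (n + 1)) with hG
  have key2 : ∀ t ∈ Finset.Icc 1 T,
      f t (x t) - f t xs ≤ lam t * A2 + (G (t - 1) - G t)
        + (M t + lam t * Md) ^ 2 /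
          ((∑ s ∈ Finset.Icc 1 t, μ s) + ∑ s ∈ Finset.Icc 1 t, lam s) := by
    intro t ht
    have h1 := key t ht
    rw [Finset.mem_Icc] at ht
    have e1 : G (t - 1) = ((∑ s ∈ Finset.Icc 1 (t - 1), μ s)
        + ∑ s ∈ Finset.Icc 1 (t - 1), lam s) * breg h xs (x t) := by
      rw [hG]
      simp only
      rw [show t - 1 + 1 = t from by omega]
    rw [e1, hG]
    exact h1
  have hsum := Finset.sum_le_sum key2
  rw [Finset.sum_add_distrib, Finset.sum_add_distrib, ← Finset.sum_mul,
    telescope_aux G T] at hsum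
  have hG0 : G 0 = 0 := by
    rw [hG]
    simp only
    rw [Finset.Icc_eq_empty (by omega)]
    simp
  have hGT : 0 ≤ G T := by
    rw [hG]
    exact mul_nonneg (hpos T (by rw [Finset.mem_Icc]; omega)).le
      (breg_nonneg hdiff hconv _ _)
  rw [← Finset.sum_sub_distrib] at *
  linarith [hsum, hGT, hG0]
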